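/- For a unit vector ψ and tangent vectors δv, δw with Re⟨ψ,δv⟩ = Re⟨ψ,δw⟩ = 0, the exterior derivative of α in local coordinates at v = 0 satisfies dα(δv, δw) = ∂_{δv}[Im⟨v,δw⟩/(1+‖v‖²)] − ∂_{δw}[Im⟨v,δv⟩/(1+‖v‖²)] evaluated at v = 0, which equals 2 Im⟨δv, δw⟩. -/

import Mathlib

open scoped ComplexInnerProductSpace

theorem aux_fderiv {V : Type*} [NormedAddCommGroup V] [InnerProductSpace ℂ V]
    (w u : V) :
    fderiv ℝ (fun v : V => (1 + ‖v‖ ^ 2)⁻¹ * (⟪v, w⟫).im) 0 u = (⟪u, w⟫).im := by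
  have hsq : HasFDerivAt (fun v : V => ‖v‖ ^ 2) (0 : V →L[ℝ] ℝ) 0 := by
    rw [hasFDerivAt_iff_isLittleO_nhds_zero]
    have h1 : (fun h : V => ‖h‖) =o[nhds 0] (fun _ : V => (1 : ℝ)) :=
      Asymptotics.isLittleO_one_iff ℝ |>.mpr tendsto_norm_zero
    have h2 : (fun h : V => ‖h‖ * ‖h‖) =o[nhds 0] (fun h : V => 1 * ‖h‖) :=
      h1.mul_isBigO (Asymptotics.isBigO_refl _ _)
    simp only [one_mul] at h2
    simpa [pow_two] using Asymptotics.isLittleO_norm_right.mp h2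
  have hadd : HasFDerivAt (fun v : V => 1 + ‖v‖ ^ 2) (0 : V →L[ℝ] ℝ) 0 := by
    exact ((hasFDerivAt_const (1 : ℝ) (0 : V)).add hsq).congr_fderiv (add_zero _)
  have hf : HasFDerivAt (fun v : V => (1 + ‖v‖ ^ 2)⁻¹) (0 : V →L[ℝ] ℝ) 0 := by
    have hne : (1 : ℝ) + ‖(0 : V)‖ ^ 2 ≠ 0 := by norm_num
    have := (hasFDerivAt_inv' (𝕜 := ℝ) hne).comp (0 : V) hadd
    exact this.congr_fderiv (by simp)
  have key : ∀ a b : V, (⟪a, b⟫ : ℂ).im = -(⟪b, a⟫ : ℂ).im := fun a b => by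
    rw [← inner_conj_symm a b, Complex.conj_im]
  set L : V →L[ℝ] ℝ :=
    -(Complex.imCLM.comp ((innerSL ℂ w).restrictScalars ℝ)) with hL
  have hg : HasFDerivAt (fun v : V => (⟪v, w⟫).im) L 0 := by
    have heq : (fun v : V => (⟪v, w⟫).im) = fun v => L v := by
      funext v
      simp [hL, key v w]
    rw [heq]
    exact L.hasFDerivAt
  have hprod := hf.mul hg
  rw [HasFDerivAt.fderiv (f := fun v : V => (1 + ‖v‖ ^ 2)⁻¹ * (⟪v, w⟫).im) hprod]
  simp [hL, key u w]

theorem curvature_local_formula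
    {V : Type*} [NormedAddCommGroup V] [InnerProductSpace ℂ V]
    (ψ δv δw : V) (hψ : ‖ψ‖ = 1)
    (hδv : (⟪ψ, δv⟫).re = 0) (hδw : (⟪ψ, δw⟫).re = 0) :
    fderiv ℝ (fun v : V => (1 + ‖v‖ ^ 2)⁻¹ * (⟪v, δw⟫).im) 0 δv
      - fderiv ℝ (fun v : V => (1 + ‖v‖ ^ 2)⁻¹ * (⟪v, δv⟫).im) 0 δw
      = 2 * (⟪δv, δw⟫).im := by
  have key : (⟪δw, δv⟫ : ℂ).im = -(⟪δv, δw⟫ : ℂ).im := by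
    rw [← inner_conj_symm δw δv, Complex.conj_im]
  rw [aux_fderiv, aux_fderiv, key]
  ring
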